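/- In the ReLU setting with training examples from the standard basis {e₁,…,e_d} all labeled +1, the set K_t = {e_j : ⟨wⁱ_t, e_j⟩ ≤ 0 for all i ∈ [k]} is invariant under SGD updates: K_{t+1} = K_t for every t. -/

import Mathlib

open scoped RealInnerProductSpace

/-- Invariance of `K_t = {e_ℓ : ⟪wⁱ, e_ℓ⟫ ≤ 0 for all i}` under one SGD step of the
ReLU network on orthonormal examples `e_j` labeled `+1`: if the example `e_j` is
presented (no update when `N_W(e_j) ≥ 1`, otherwise each `wⁱ` with `⟪wⁱ,e_j⟫ > 0`
gets `+η e_j`), then the set `K` is unchanged. -/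
theorem stmt11 (d k : ℕ) (η : ℝ) (hη : 0 < η) (j : Fin d)
    (w u w' : Fin k → EuclideanSpace ℝ (Fin d))
    (N : ℝ)
    (hN : N = ∑ i, max ⟪w i, EuclideanSpace.single j (1:ℝ)⟫ 0
            - ∑ i, max ⟪u i, EuclideanSpace.single j (1:ℝ)⟫ 0)
    (hw' : ∀ i, w' i =
      if 1 ≤ N then w i
      else if 0 < ⟪w i, EuclideanSpace.single j (1:ℝ)⟫ then
        w i + η • EuclideanSpace.single j (1:ℝ)
      else w i) :
    ∀ ℓ : Fin d,
      (∀ i, ⟪w' i, EuclideanSpace.single ℓ (1:ℝ)⟫ ≤ 0) ↔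
      (∀ i, ⟪w i, EuclideanSpace.single ℓ (1:ℝ)⟫ ≤ 0) := by
  intro ℓ
  have key : ∀ i, ⟪w' i, EuclideanSpace.single ℓ (1:ℝ)⟫ ≤ 0 ↔
      ⟪w i, EuclideanSpace.single ℓ (1:ℝ)⟫ ≤ 0 := by
    intro i
    rw [hw' i]
    split_ifs with h1 h2
    · rfl
    · rw [inner_add_left, inner_smul_left]
      by_cases hℓ : ℓ = j
      · subst hℓ
        simp only [real_inner_self_eq_norm_sq, RCLike.star_def, conj_trivial]
        have hn : ‖EuclideanSpace.single ℓ (1:ℝ)‖ ^ 2 = 1 := by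
          rw [EuclideanSpace.norm_single]; norm_num
        rw [hn]
        constructor
        · intro h; linarith
        · intro h; linarith
      · have hz : ⟪EuclideanSpace.single j (1:ℝ), EuclideanSpace.single ℓ (1:ℝ)⟫ = 0 := by
          simp [EuclideanSpace.inner_single_left, EuclideanSpace.single_apply]
          exact Ne.symm hℓ
        rw [hz]; simp
    · rfl
  constructor
  · intro h i; exact (key i).mp (h i)
  · intro h i; exact (key i).mpr (h i)
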